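/- If G is a connected finite simple graph with n(G) ≥ 3, then ∂_s(G) ≥ n(G)/4, i.e., 4·∂_s(G) ≥ n(G). -/

import Mathlib

open Finset

namespace StrongDifferential

variable {V : Type*} [Fintype V] [DecidableEq V] (G : SimpleGraph V) [DecidableRel G.Adj]

/-- The external neighbourhood `N_e(D)` of a set `D`: vertices outside `D`
with a neighbour in `D`. -/
def extNbhd (D : Finset V) : Finset V :=
  univ.filter fun u => u ∉ D ∧ ∃ v ∈ D, G.Adj u v

/-- The external private neighbourhood `epn(v, D)` of `v` with respect to `D`. -/
def epn (v : V) (D : Finset V) : Finset V :=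
  univ.filter fun u => u ∉ D ∧ G.neighborFinset u ∩ D = {v}

/-- `D_w`: the vertices of `D` having a nonempty external private neighbourhood. -/
def weak (D : Finset V) : Finset V :=
  D.filter fun v => (epn G v D).Nonempty

/-- `D_s = D \ D_w`. -/
def strong (D : Finset V) : Finset V :=
  D \ weak G D

/-- The strong differential `∂ₛ(D) = |N_e(D)| - |D_w|` of a set `D`. -/
def sdiffSet (D : Finset V) : ℤ :=
  (extNbhd G D).card - (weak G D).card

/-- The strong differential `∂ₛ(G) = max {∂ₛ(D) : D ⊆ V(G)}` of the graph `G`. -/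
def sdiff : ℤ :=
  (univ : Finset V).powerset.sup' ⟨∅, empty_mem_powerset _⟩ (sdiffSet G)

/-- The differential `∂(D) = |N_e(D)| - |D|` of a set `D`. -/
def diffSet (D : Finset V) : ℤ :=
  (extNbhd G D).card - D.card

/-- The differential `∂(G) = max {∂(D) : D ⊆ V(G)}` of the graph `G`. -/
def gdiff : ℤ :=
  (univ : Finset V).powerset.sup' ⟨∅, empty_mem_powerset _⟩ (diffSet G)

/-- A dominating set: every vertex outside `D` has a neighbour in `D`. -/
def IsDomSet (D : Finset V) : Prop :=
  ∀ v, v ∉ D → ∃ u ∈ D, G.Adj v u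

/-- The domination number `γ(G)`. -/
noncomputable def gamma : ℕ :=
  sInf {k | ∃ D : Finset V, IsDomSet G D ∧ D.card = k}

/-- A 2-dominating set: every vertex outside `D` has at least two neighbours in `D`. -/
def Is2DomSet (D : Finset V) : Prop :=
  ∀ v, v ∉ D → 2 ≤ (G.neighborFinset v ∩ D).card

/-- The 2-domination number `γ₂(G)`. -/
noncomputable def gamma2 : ℕ :=
  sInf {k | ∃ D : Finset V, Is2DomSet G D ∧ D.card = k}

/-- An Italian dominating function: `f : V → {0,1,2}` such that every
vertex of weight `0` has total weight at least `2` on its neighbourhood. -/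
def IsIDF (f : V → ℕ) : Prop :=
  (∀ v, f v ≤ 2) ∧ ∀ v, f v = 0 → 2 ≤ ∑ u ∈ G.neighborFinset v, f u

/-- The Italian domination number `γ_I(G)`. -/
noncomputable def italian : ℕ :=
  sInf {k | ∃ f : V → ℕ, IsIDF G f ∧ ∑ v, f v = k}

/-- `σ(G)`: the number of vertices adjacent to at least two leaves. -/
def sigmaSupp : ℕ :=
  (univ.filter fun v => 2 ≤ ((G.neighborFinset v).filter fun u => G.degree u = 1).card).card

/-- The independence number `α(G)`. -/
noncomputable def indepNum : ℕ :=
  sSup {k | ∃ S : Finset V, (∀ u ∈ S, ∀ w ∈ S, u ≠ w → ¬ G.Adj u w) ∧ S.card = k}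

/-- The vertex cover number `β(G)`. -/
noncomputable def vcNum : ℕ :=
  sInf {k | ∃ S : Finset V, (∀ u v, G.Adj u v → u ∈ S ∨ v ∈ S) ∧ S.card = k}

/-- A semitotal dominating set: a dominating set in which every vertex is
within distance two of another vertex of the set. -/
def IsSemitotalDomSet (D : Finset V) : Prop :=
  IsDomSet G D ∧ ∀ v ∈ D, ∃ u ∈ D, u ≠ v ∧ (G.Adj v u ∨ ∃ w, G.Adj v w ∧ G.Adj w u)

/-- The semitotal domination number `γ_{t2}(G)`. -/
noncomputable def gammaT2 : ℕ :=
  sInf {k | ∃ D : Finset V, IsSemitotalDomSet G D ∧ D.card = k}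

set_option linter.unusedSectionVars false
set_option linter.unusedVariables false
set_option maxHeartbeats 1000000

section AuxStrongDiff

variable {V : Type*} [Fintype V] [DecidableEq V] (G : SimpleGraph V) [DecidableRel G.Adj]

/-- A walk staying inside `S`. -/
def WalkIn (S : Finset V) (u v : V) : Prop :=
  ∃ w : G.Walk u v, ∀ x ∈ w.support, x ∈ S

/-- Connectivity of the induced subgraph on `S`. -/
def Conn (S : Finset V) : Prop :=
  ∀ u ∈ S, ∀ v ∈ S, WalkIn G S u v

/-- Distance within `S` from `v` to `r`. -/
noncomputable def dOn (S : Finset V) (v r : V) : ℕ :=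
  sInf {n | ∃ w : G.Walk v r, w.length = n ∧ ∀ x ∈ w.support, x ∈ S}

variable {G}

lemma walkIn_self {S : Finset V} {v : V} (hv : v ∈ S) : WalkIn G S v v :=
  ⟨SimpleGraph.Walk.nil, by simp [hv]⟩

lemma dOn_le {S : Finset V} {v r : V} (w : G.Walk v r) (hw : ∀ x ∈ w.support, x ∈ S) :
    dOn G S v r ≤ w.length :=
  Nat.sInf_le ⟨w, rfl, hw⟩

lemma exists_min_walk {S : Finset V} {v r : V} (h : WalkIn G S v r) :
    ∃ w : G.Walk v r, w.length = dOn G S v r ∧ ∀ x ∈ w.support, x ∈ S := by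
  obtain ⟨w, hw⟩ := h
  have hne : {n | ∃ w : G.Walk v r, w.length = n ∧ ∀ x ∈ w.support, x ∈ S}.Nonempty :=
    ⟨w.length, w, rfl, hw⟩
  exact Nat.sInf_mem hne

lemma dOn_self {S : Finset V} {r : V} (hr : r ∈ S) : dOn G S r r = 0 :=
  Nat.le_zero.mp (dOn_le SimpleGraph.Walk.nil (by simp [hr]))

lemma eq_of_dOn_eq_zero {S : Finset V} {v r : V} (h : WalkIn G S v r)
    (h0 : dOn G S v r = 0) : v = r := by
  obtain ⟨w, hl, -⟩ := exists_min_walk h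
  exact SimpleGraph.Walk.eq_of_length_eq_zero (by rw [hl, h0])

lemma exists_pred {S : Finset V} {v r : V} (hr : r ∈ S) (h : WalkIn G S v r)
    (hvr : v ≠ r) :
    ∃ y ∈ S, G.Adj v y ∧ WalkIn G S y r ∧ dOn G S y r + 1 = dOn G S v r := by
  obtain ⟨w, hl, hw⟩ := exists_min_walk h
  obtain ⟨y, ha, q, rfl⟩ := SimpleGraph.Walk.exists_eq_cons_of_ne hvr w
  have hq : ∀ x ∈ q.support, x ∈ S := fun x hx => hw x (by simp [SimpleGraph.Walk.support_cons, hx])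
  have hy : y ∈ S := hq y q.start_mem_support
  refine ⟨y, hy, ha, ⟨q, hq⟩, ?_⟩
  have h1 : dOn G S y r ≤ q.length := dOn_le q hq
  have h2 : dOn G S v r ≤ dOn G S y r + 1 := by
    obtain ⟨q', hq'l, hq's⟩ := exists_min_walk (⟨q, hq⟩ : WalkIn G S y r)
    have := dOn_le (SimpleGraph.Walk.cons ha q') (by
      intro x hx
      rcases (by simpa [SimpleGraph.Walk.support_cons] using hx : x = v ∨ x ∈ q'.support) with rfl | hx
      · exact hw x (by simp [SimpleGraph.Walk.support_cons])
      · exact hq's x hx)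
    simpa [hq'l] using this
  have h3 : q.length + 1 = dOn G S v r := by
    simpa using hl
  omega

lemma dOn_le_succ_of_adj {S : Finset V} {v y r : V} (hv : v ∈ S) (ha : G.Adj v y)
    (h : WalkIn G S y r) : dOn G S v r ≤ dOn G S y r + 1 := by
  obtain ⟨q, hql, hqs⟩ := exists_min_walk h
  have := dOn_le (SimpleGraph.Walk.cons ha q) (by
    intro x hx
    rcases (by simpa [SimpleGraph.Walk.support_cons] using hx : x = v ∨ x ∈ q.support) with rfl | hx
    · exact hv
    · exact hqs x hx)
  simpa [hql] using this

/-- Build connectivity from a "predecessor" structure. -/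
lemma conn_of_pred {T : Finset V} {r : V} (μ : V → ℕ) (hr : r ∈ T)
    (H : ∀ w ∈ T, w ≠ r → ∃ y ∈ T, G.Adj w y ∧ μ y < μ w) : Conn G T := by
  have key : ∀ n, ∀ w ∈ T, μ w ≤ n → WalkIn G T w r := by
    intro n
    induction n with
    | zero =>
      intro w hw hμ
      by_cases hwr : w = r
      · subst hwr; exact walkIn_self hr
      · obtain ⟨y, -, -, hlt⟩ := H w hw hwr; omega
    | succ n ih =>
      intro w hw hμ
      by_cases hwr : w = r
      · subst hwr; exact walkIn_self hr
      · obtain ⟨y, hy, ha, hlt⟩ := H w hw hwr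
        obtain ⟨q, hq⟩ := ih y hy (by omega)
        exact ⟨SimpleGraph.Walk.cons ha q, by
          intro x hx
          rcases (by simpa [SimpleGraph.Walk.support_cons] using hx : x = w ∨ x ∈ q.support) with rfl | hx
          · exact hw
          · exact hq x hx⟩
  intro u hu v hv
  obtain ⟨w1, hw1⟩ := key (μ u) u hu le_rfl
  obtain ⟨w2, hw2⟩ := key (μ v) v hv le_rfl
  refine ⟨w1.append w2.reverse, ?_⟩
  intro x hx
  rw [SimpleGraph.Walk.mem_support_append_iff] at hx
  rcases hx with hx | hx
  · exact hw1 x hx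
  · exact hw2 x (by simpa using hx)

lemma adj_of_conn_pair {T : Finset V} {u v : V} (h : WalkIn G T u v) (hT : T ⊆ {u, v})
    (hne : u ≠ v) : G.Adj u v := by
  obtain ⟨w, hw⟩ := h
  obtain ⟨y, ha, q, rfl⟩ := SimpleGraph.Walk.exists_eq_cons_of_ne hne w
  have hy : y ∈ T := hw y (by simp [SimpleGraph.Walk.support_cons, q.start_mem_support])
  have : y = u ∨ y = v := by simpa using hT hy
  rcases this with rfl | rfl
  · exact absurd rfl ha.ne
  · exact ha

lemma two_le_sum_pair {f : V → ℕ} {T : Finset V} {a b : V} (ha : a ∈ T) (hb : b ∈ T)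
    (hab : a ≠ b) (h : 2 ≤ f a + f b) : 2 ≤ ∑ y ∈ T, f y := by
  calc 2 ≤ f a + f b := h
    _ = ∑ y ∈ ({a, b} : Finset V), f y := by rw [Finset.sum_pair hab]
    _ ≤ ∑ y ∈ T, f y := Finset.sum_le_sum_of_subset (by
        intro x hx; rcases Finset.mem_insert.mp hx with rfl | hx
        · exact ha
        · rcases Finset.mem_singleton.mp hx with rfl; exact hb)

lemma two_le_sum_single {f : V → ℕ} {T : Finset V} {a : V} (ha : a ∈ T)
    (h : 2 ≤ f a) : 2 ≤ ∑ y ∈ T, f y :=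
  le_trans h (Finset.single_le_sum (fun _ _ => Nat.zero_le _) ha)

/-- weight function shape used in the construction -/
def shape (g : V) (a : ℕ) (B : Finset V) (f' : V → ℕ) : V → ℕ :=
  fun v => (if v = g then a else 0) + (if v ∈ B then 1 else 0) + f' v

lemma shape_self (g : V) (a : ℕ) (B : Finset V) (f' : V → ℕ) :
    a ≤ shape g a B f' g := by
  simp only [shape, if_pos rfl]
  exact le_trans (Nat.le_add_right _ _) (Nat.le_add_right _ _)

lemma shape_memB {g x : V} {a : ℕ} {B : Finset V} {f' : V → ℕ} (hx : x ∈ B) :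
    1 ≤ shape g a B f' x := by
  simp only [shape, if_pos hx]
  exact le_trans (Nat.le_add_left _ _) (Nat.le_add_right _ _)

lemma shape_f' (g : V) (a : ℕ) (B : Finset V) (f' : V → ℕ) (v : V) :
    f' v ≤ shape g a B f' v := Nat.le_add_left _ _

lemma shape_supp {S : Finset V} {g : V} {a : ℕ} {B : Finset V} {f' : V → ℕ}
    (hg : g ∈ S) (hB : B ⊆ S) (hf' : ∀ v, v ∉ S → f' v = 0) :
    ∀ v, v ∉ S → shape g a B f' v = 0 := by
  intro v hv
  have h1 : v ≠ g := by rintro rfl; exact hv hg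
  have h2 : v ∉ B := fun h => hv (hB h)
  simp [shape, h1, h2, hf' v hv]

lemma shape_sum {S : Finset V} {g : V} {a : ℕ} {B : Finset V} (f' : V → ℕ)
    (hg : g ∈ S) (hB : B ⊆ S) :
    ∑ v ∈ S, shape g a B f' v = a + B.card + ∑ v ∈ S, f' v := by
  unfold shape
  rw [Finset.sum_add_distrib, Finset.sum_add_distrib]
  congr 2
  · rw [Finset.sum_ite_eq' S g (fun _ => a), if_pos hg]
  · rw [Finset.sum_ite_mem, Finset.inter_eq_right.mpr hB, Finset.sum_const, smul_eq_mul, mul_one]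

lemma cover_mono {S R : Finset V} (hRS : R ⊆ S) {f f' : V → ℕ}
    (hle : ∀ v, f' v ≤ f v) {v : V}
    (h : 1 ≤ f' v ∨ 2 ≤ ∑ y ∈ R.filter (fun y => G.Adj v y), f' y) :
    1 ≤ f v ∨ 2 ≤ ∑ y ∈ S.filter (fun y => G.Adj v y), f y := by
  rcases h with h | h
  · exact Or.inl (le_trans h (hle v))
  · refine Or.inr (le_trans h ?_)
    calc ∑ y ∈ R.filter (fun y => G.Adj v y), f' y
        ≤ ∑ y ∈ R.filter (fun y => G.Adj v y), f y := Finset.sum_le_sum (fun i _ => hle i)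
      _ ≤ ∑ y ∈ S.filter (fun y => G.Adj v y), f y :=
          Finset.sum_le_sum_of_subset (Finset.filter_subset_filter _ hRS)


lemma adj_of_dOn_eq_one {S : Finset V} {v r : V} (hr : r ∈ S) (h : WalkIn G S v r)
    (h1 : dOn G S v r = 1) : G.Adj v r := by
  have hvr : v ≠ r := by
    rintro rfl; rw [dOn_self hr] at h1; exact absurd h1 (by omega)
  obtain ⟨w, hl, hw⟩ := exists_min_walk h
  obtain ⟨y, ha, q, rfl⟩ := SimpleGraph.Walk.exists_eq_cons_of_ne hvr w
  have hq0 : q.length = 0 := by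
    simp only [SimpleGraph.Walk.length_cons, h1] at hl; omega
  have : y = r := SimpleGraph.Walk.eq_of_length_eq_zero hq0
  subst this; exact ha

lemma main (N : ℕ) : ∀ S : Finset V, S.card ≤ N → Conn G S → 3 ≤ S.card →
    ∃ f : V → ℕ, (∀ v, v ∉ S → f v = 0) ∧
      (∀ v ∈ S, 1 ≤ f v ∨ 2 ≤ ∑ y ∈ S.filter (fun y => G.Adj v y), f y) ∧
      4 * ∑ v ∈ S, f v ≤ 3 * S.card := by
  induction N with
  | zero => intro S h1 _ h3; omega
  | succ N IH =>
    intro S hcardN hconn hcard3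
    classical
    have hSne : S.Nonempty := Finset.card_pos.mp (by omega)
    obtain ⟨r, hr⟩ := hSne
    have hwalkS : ∀ v ∈ S, WalkIn G S v r := fun v hv => hconn v hv r hr
    have hDr : dOn G S r r = 0 := dOn_self hr
    have hzero : ∀ v ∈ S, dOn G S v r = 0 → v = r :=
      fun v hv h0 => eq_of_dOn_eq_zero (hwalkS v hv) h0
    have himg : (S.image (fun v => dOn G S v r)).Nonempty := ⟨_, mem_image_of_mem _ hr⟩
    obtain ⟨d, hle, u, hu, hud⟩ : ∃ d, (∀ v ∈ S, dOn G S v r ≤ d) ∧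
        ∃ u ∈ S, dOn G S u r = d := by
      refine ⟨(S.image (fun v => dOn G S v r)).max' himg,
        fun v hv => Finset.le_max' (S.image (fun v => dOn G S v r)) (dOn G S v r)
          (mem_image_of_mem _ hv), ?_⟩
      obtain ⟨u, hu, hud⟩ := Finset.mem_image.mp (Finset.max'_mem _ himg)
      exact ⟨u, hu, hud⟩
    by_cases hd1 : d ≤ 1
    · -- star case
      refine ⟨shape r 2 ∅ (fun _ => 0),
        shape_supp hr (empty_subset _) (fun _ _ => rfl), ?_, ?_⟩
      · intro v hv
        by_cases hvr : v = r
        · exact Or.inl (by rw [hvr]; exact le_trans one_le_two (shape_self r 2 ∅ _))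
        · refine Or.inr (two_le_sum_single (a := r) ?_ (shape_self r 2 ∅ _))
          refine mem_filter.mpr ⟨hr, ?_⟩
          have h0 : dOn G S v r ≠ 0 := fun h => hvr (hzero v hv h)
          have h1 : dOn G S v r = 1 := by have := hle v hv; omega
          exact adj_of_dOn_eq_one hr (hwalkS v hv) h1
      · rw [shape_sum _ hr (empty_subset _)]
        simp only [Finset.card_empty, Finset.sum_const_zero]
        omega
    · push_neg at hd1
      by_cases hA : ∃ q ∈ S, dOn G S q r + 1 = d ∧
          2 ≤ (S.filter (fun x => dOn G S x r = d ∧ G.Adj q x)).card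
      · -- CASE A
        obtain ⟨q, hqS, hqd, hqc⟩ := hA
        obtain ⟨C, hC⟩ : ∃ C, C = S.filter (fun x => dOn G S x r = d ∧ G.Adj q x) := ⟨_, rfl⟩
        rw [← hC] at hqc
        have hCmem : ∀ x, x ∈ C ↔ x ∈ S ∧ (dOn G S x r = d ∧ G.Adj q x) :=
          fun x => by rw [hC]; exact Finset.mem_filter
        have hCS : C ⊆ S := fun x hx => ((hCmem x).mp hx).1
        obtain ⟨W, hW⟩ : ∃ W, W = insert q C := ⟨_, rfl⟩
        have hWmem : ∀ x, x ∈ W ↔ x = q ∨ x ∈ C := fun x => by rw [hW]; exact Finset.mem_insert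
        have hWS : W ⊆ S := by
          intro x hx
          rcases (hWmem x).mp hx with rfl | hx
          · exact hqS
          · exact hCS hx
        have hqC : q ∉ C := fun h => by have := ((hCmem q).mp h).2.1; omega
        have hWcard : W.card = C.card + 1 := by rw [hW]; exact card_insert_of_notMem hqC
        obtain ⟨R, hRdef⟩ : ∃ R, R = S \ W := ⟨_, rfl⟩
        have hRmem : ∀ x, x ∈ R ↔ x ∈ S ∧ x ∉ W :=
          fun x => by rw [hRdef]; exact Finset.mem_sdiff
        have hRS : R ⊆ S := fun x hx => ((hRmem x).mp hx).1
        have hcardSR : S.card = W.card + R.card := by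
          have h1 : R.card = S.card - W.card := by rw [hRdef]; exact card_sdiff_of_subset hWS
          have h2 := Finset.card_le_card hWS
          omega
        have hrW : r ∉ W := by
          intro h
          rcases (hWmem r).mp h with heq | hrC
          · have h0 : dOn G S q r = 0 := by rw [← heq]; exact hDr
            omega
          · have := ((hCmem r).mp hrC).2.1; omega
        have hrR : r ∈ R := (hRmem r).mpr ⟨hr, hrW⟩
        have hpredR : ∀ w ∈ R, w ≠ r →
            ∃ y ∈ R, G.Adj w y ∧ dOn G S y r < dOn G S w r := by
          intro w hwR hwr
          have hwS := hRS hwR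
          obtain ⟨y, hyS, hadj, _, hdy⟩ := exists_pred hr (hwalkS w hwS) hwr
          refine ⟨y, (hRmem y).mpr ⟨hyS, ?_⟩, hadj, by omega⟩
          intro hyW
          rcases (hWmem y).mp hyW with heq | hyC
          · refine ((hRmem w).mp hwR).2 ((hWmem w).mpr (Or.inr ((hCmem w).mpr ⟨hwS, ?_, ?_⟩)))
            · have : dOn G S y r + 1 = d := by rw [heq]; exact hqd
              omega
            · exact heq ▸ hadj.symm
          · have := ((hCmem y).mp hyC).2.1
            have := hle w hwS
            omega
        have hconnR : Conn G R := conn_of_pred (fun v => dOn G S v r) hrR hpredR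
        have h1R : 1 ≤ R.card := Finset.card_pos.mpr ⟨r, hrR⟩
        have hcovq : ∀ (B : Finset V) (f' : V → ℕ), (1:ℕ) ≤ shape q 2 B f' q :=
          fun B f' => le_trans one_le_two (shape_self q 2 B f')
        have hcovC : ∀ (B : Finset V) (f' : V → ℕ), ∀ v ∈ C,
            2 ≤ ∑ y ∈ S.filter (fun y => G.Adj v y), shape q 2 B f' y := by
          intro B f' v hvC
          refine two_le_sum_single ?_ (shape_self q 2 B f')
          exact mem_filter.mpr ⟨hqS, ((hCmem v).mp hvC).2.2.symm⟩
        by_cases hR3 : 3 ≤ R.card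
        · -- recurse
          have hRN : R.card ≤ N := by omega
          obtain ⟨f', hs', hc', hb'⟩ := IH R hRN hconnR hR3
          have hs'S : ∀ v, v ∉ S → f' v = 0 := fun v hv => hs' v (fun h => hv (hRS h))
          refine ⟨shape q 2 ∅ f', shape_supp hqS (empty_subset _) hs'S, ?_, ?_⟩
          · intro v hv
            by_cases hvW : v ∈ W
            · rcases (hWmem v).mp hvW with rfl | hvC
              · exact Or.inl (hcovq _ _)
              · exact Or.inr (hcovC _ _ v hvC)
            · exact cover_mono hRS (shape_f' q 2 ∅ f') (hc' v ((hRmem v).mpr ⟨hv, hvW⟩))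
          · rw [shape_sum _ hqS (empty_subset _)]
            have hsub : ∑ v ∈ S, f' v = ∑ v ∈ R, f' v :=
              (Finset.sum_subset hRS (fun x _ hx => hs' x hx)).symm
            simp only [Finset.card_empty, hsub]
            omega
        · by_cases hR1 : R.card = 1
          · -- R = {r}
            refine ⟨shape q 2 {r} (fun _ => 0),
              shape_supp hqS (singleton_subset_iff.mpr hr) (fun _ _ => rfl), ?_, ?_⟩
            · intro v hv
              by_cases hvW : v ∈ W
              · rcases (hWmem v).mp hvW with rfl | hvC
                · exact Or.inl (hcovq _ _)
                · exact Or.inr (hcovC _ _ v hvC)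
              · have hvR : v ∈ R := (hRmem v).mpr ⟨hv, hvW⟩
                have hveq : v = r := by
                  obtain ⟨x, hx⟩ := Finset.card_eq_one.mp hR1
                  rw [hx] at hvR hrR
                  rw [Finset.mem_singleton.mp hvR, ← Finset.mem_singleton.mp hrR]
                exact Or.inl (by rw [hveq]; exact shape_memB (Finset.mem_singleton_self r))
            · rw [shape_sum _ hqS (singleton_subset_iff.mpr hr)]
              simp only [Finset.card_singleton, Finset.sum_const_zero]
              omega
          · -- R.card = 2
            have hR2 : R.card = 2 := by omega
            have hqr : q ≠ r := by rintro rfl; omega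
            obtain ⟨y, hyS, hadjqy, _, hdy⟩ := exists_pred hr (hwalkS q hqS) hqr
            have hyW : y ∉ W := by
              intro h
              rcases (hWmem y).mp h with heq | hyC
              · exact (G.loopless.irrefl q) (heq ▸ hadjqy)
              · have := ((hCmem y).mp hyC).2.1; omega
            have hyR : y ∈ R := (hRmem y).mpr ⟨hyS, hyW⟩
            obtain ⟨x1, x2, hx12, hRe⟩ := Finset.card_eq_two.mp hR2
            have hyb : ∃ b, R = {y, b} ∧ y ≠ b := by
              rw [hRe] at hyR
              rcases Finset.mem_insert.mp hyR with rfl | h2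
              · exact ⟨x2, hRe, hx12⟩
              · rcases Finset.mem_singleton.mp h2 with rfl
                exact ⟨x1, by rw [hRe, Finset.pair_comm], hx12.symm⟩
            obtain ⟨b, hRe2, hyb2⟩ := hyb
            have hbR : b ∈ R := by rw [hRe2]; simp
            have hbS : b ∈ S := hRS hbR
            have hadjyb : G.Adj y b :=
              adj_of_conn_pair (hconnR y hyR b hbR) (by rw [← hRe2]) hyb2
            refine ⟨shape q 2 {b} (fun _ => 0),
              shape_supp hqS (singleton_subset_iff.mpr hbS) (fun _ _ => rfl), ?_, ?_⟩
            · intro v hv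
              by_cases hvW : v ∈ W
              · rcases (hWmem v).mp hvW with rfl | hvC
                · exact Or.inl (hcovq _ _)
                · exact Or.inr (hcovC _ _ v hvC)
              · have hvR : v ∈ R := (hRmem v).mpr ⟨hv, hvW⟩
                rw [hRe2] at hvR
                rcases Finset.mem_insert.mp hvR with rfl | h2
                · refine Or.inr (two_le_sum_single ?_ (shape_self q 2 {b} _))
                  exact mem_filter.mpr ⟨hqS, hadjqy.symm⟩
                · rcases Finset.mem_singleton.mp h2 with rfl
                  exact Or.inl (shape_memB (Finset.mem_singleton_self v))
            · rw [shape_sum _ hqS (singleton_subset_iff.mpr hbS)]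
              simp only [Finset.card_singleton, Finset.sum_const_zero]
              omega
      · -- CASE B
        push_neg at hA
        have hB1 : ∀ q ∈ S, dOn G S q r + 1 = d →
            (S.filter (fun x => dOn G S x r = d ∧ G.Adj q x)).card ≤ 1 := by
          intro q hq hqd
          have := hA q hq hqd
          omega
        have hur : u ≠ r := by rintro rfl; omega
        obtain ⟨p, hpS, hadjup, hwalkp, hdp⟩ := exists_pred hr (hwalkS u hu) hur
        have hdp' : dOn G S p r + 1 = d := by omega
        have hpr : p ≠ r := by
          rintro rfl
          rw [hDr] at hdp'
          omega
        obtain ⟨g, hgS, hadjpg, hwalkg, hdg⟩ := exists_pred hr (hwalkS p hpS) hpr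
        have hdg' : dOn G S g r + 2 = d := by omega
        obtain ⟨C, hC⟩ : ∃ C, C = S.filter (fun c => dOn G S c r + 1 = d ∧ G.Adj g c) := ⟨_, rfl⟩
        have hCmem : ∀ x, x ∈ C ↔ x ∈ S ∧ (dOn G S x r + 1 = d ∧ G.Adj g x) :=
          fun x => by rw [hC]; exact Finset.mem_filter
        have hCS : C ⊆ S := fun x hx => ((hCmem x).mp hx).1
        obtain ⟨Gc, hGc⟩ : ∃ Gc,
            Gc = S.filter (fun x => dOn G S x r = d ∧ ∃ c ∈ C, G.Adj c x) := ⟨_, rfl⟩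
        have hGmem : ∀ x, x ∈ Gc ↔ x ∈ S ∧ (dOn G S x r = d ∧ ∃ c ∈ C, G.Adj c x) :=
          fun x => by rw [hGc]; exact Finset.mem_filter
        have hGS : Gc ⊆ S := fun x hx => ((hGmem x).mp hx).1
        have hpC : p ∈ C := (hCmem p).mpr ⟨hpS, hdp', hadjpg.symm⟩
        have huG : u ∈ Gc := (hGmem u).mpr ⟨hu, hud, p, hpC, hadjup.symm⟩
        have ht1 : 1 ≤ C.card := Finset.card_pos.mpr ⟨p, hpC⟩
        have hm : Gc.card ≤ C.card := by
          have hsub : Gc ⊆ C.biUnion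
              (fun c => S.filter (fun x => dOn G S x r = d ∧ G.Adj c x)) := by
            intro x hx
            obtain ⟨hxS, hxd, c, hcC, hadj⟩ := (hGmem x).mp hx
            exact mem_biUnion.mpr ⟨c, hcC, mem_filter.mpr ⟨hxS, hxd, hadj⟩⟩
          calc Gc.card ≤ _ := Finset.card_le_card hsub
            _ ≤ ∑ c ∈ C, (S.filter (fun x => dOn G S x r = d ∧ G.Adj c x)).card :=
                Finset.card_biUnion_le
            _ ≤ ∑ _c ∈ C, 1 := Finset.sum_le_sum
                (fun c hc => hB1 c (hCS hc) ((hCmem c).mp hc).2.1)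
            _ = C.card := by simp
        obtain ⟨W, hW⟩ : ∃ W, W = insert g (C ∪ Gc) := ⟨_, rfl⟩
        have hWmem : ∀ x, x ∈ W ↔ x = g ∨ x ∈ C ∨ x ∈ Gc :=
          fun x => by rw [hW, Finset.mem_insert, Finset.mem_union]
        have hWS : W ⊆ S := by
          intro x hx
          rcases (hWmem x).mp hx with rfl | hx | hx
          · exact hgS
          · exact hCS hx
          · exact hGS hx
        have hgC : g ∉ C := fun h => by have := ((hCmem g).mp h).2.1; omega
        have hgG : g ∉ Gc := fun h => by have := ((hGmem g).mp h).2.1; omega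
        have hdisj : Disjoint C Gc := Finset.disjoint_left.mpr (fun {a} haC haG => by
          have := ((hCmem a).mp haC).2.1
          have := ((hGmem a).mp haG).2.1
          omega)
        have hWcard : W.card = C.card + Gc.card + 1 := by
          have h1 : g ∉ C ∪ Gc := by
            rw [Finset.mem_union]
            rintro (h | h)
            · exact hgC h
            · exact hgG h
          rw [hW, card_insert_of_notMem h1, card_union_of_disjoint hdisj]
        obtain ⟨R, hRdef⟩ : ∃ R, R = S \ W := ⟨_, rfl⟩
        have hRmem : ∀ x, x ∈ R ↔ x ∈ S ∧ x ∉ W :=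
          fun x => by rw [hRdef]; exact Finset.mem_sdiff
        have hRS : R ⊆ S := fun x hx => ((hRmem x).mp hx).1
        have hcardSR : S.card = W.card + R.card := by
          have h1 : R.card = S.card - W.card := by rw [hRdef]; exact card_sdiff_of_subset hWS
          have h2 := Finset.card_le_card hWS
          omega
        have hpredR : ∀ w ∈ R, w ≠ r →
            ∃ y ∈ R, G.Adj w y ∧ dOn G S y r < dOn G S w r := by
          intro w hwR hwr
          have hwS := hRS hwR
          obtain ⟨y, hyS, hadj, _, hdy⟩ := exists_pred hr (hwalkS w hwS) hwr
          refine ⟨y, (hRmem y).mpr ⟨hyS, ?_⟩, hadj, by omega⟩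
          intro hyW
          rcases (hWmem y).mp hyW with heq | hyC | hyG
          · refine ((hRmem w).mp hwR).2
              ((hWmem w).mpr (Or.inr (Or.inl ((hCmem w).mpr ⟨hwS, ?_, ?_⟩))))
            · have h2 : dOn G S g r + 1 = dOn G S w r := by rw [← heq]; exact hdy
              omega
            · exact heq ▸ hadj.symm
          · have hyd := ((hCmem y).mp hyC).2.1
            exact ((hRmem w).mp hwR).2
              ((hWmem w).mpr (Or.inr (Or.inr ((hGmem w).mpr
                ⟨hwS, by omega, y, hyC, hadj.symm⟩))))
          · have := ((hGmem y).mp hyG).2.1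
            have := hle w hwS
            omega
        have hd3 : ∀ w ∈ R, 3 ≤ d := by
          intro w hwR
          by_contra hlt
          have hd2 : d = 2 := by omega
          have hwS := hRS hwR
          have hwW := ((hRmem w).mp hwR).2
          have hgr : g = r := hzero g hgS (by omega)
          have hk := hle w hwS
          apply hwW
          rcases (show dOn G S w r = 0 ∨ dOn G S w r = 1 ∨ dOn G S w r = 2 by omega)
            with h0 | h1 | h2
          · have hwr : w = r := hzero w hwS h0
            exact (hWmem w).mpr (Or.inl (by rw [hwr, ← hgr]))
          · have hwr : w ≠ r := by intro h; rw [h, hDr] at h1; omega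
            obtain ⟨y, hyS, hadj, _, hdy⟩ := exists_pred hr (hwalkS w hwS) hwr
            have hy0 : y = r := hzero y hyS (by omega)
            exact (hWmem w).mpr (Or.inr (Or.inl ((hCmem w).mpr
              ⟨hwS, by omega, by rw [hgr, ← hy0]; exact hadj.symm⟩)))
          · have hwr : w ≠ r := by intro h; rw [h, hDr] at h2; omega
            obtain ⟨y, hyS, hadj, _, hdy⟩ := exists_pred hr (hwalkS w hwS) hwr
            have hyr : y ≠ r := by intro h; rw [h, hDr] at hdy; omega
            obtain ⟨z, hzS, hadj2, _, hdz⟩ := exists_pred hr (hwalkS y hyS) hyr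
            have hz0 : z = r := hzero z hzS (by omega)
            have hyC : y ∈ C := (hCmem y).mpr
              ⟨hyS, by omega, by rw [hgr, ← hz0]; exact hadj2.symm⟩
            exact (hWmem w).mpr (Or.inr (Or.inr ((hGmem w).mpr
              ⟨hwS, by omega, y, hyC, hadj.symm⟩)))
        by_cases hR0 : R.card = 0
        · -- W = S, terminal
          have hvW : ∀ v ∈ S, v ∈ W := by
            intro v hv
            by_contra hvW
            have := Finset.card_pos.mpr ⟨v, (hRmem v).mpr ⟨hv, hvW⟩⟩
            omega
          by_cases hall : ∀ c ∈ C, ∃ x ∈ S, dOn G S x r = d ∧ G.Adj c x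
          · refine ⟨shape g 1 Gc (fun _ => 0), shape_supp hgS hGS (fun _ _ => rfl), ?_, ?_⟩
            · intro v hv
              rcases (hWmem v).mp (hvW v hv) with heq | hvC | hvG
              · exact Or.inl (by rw [heq]; exact shape_self g 1 Gc _)
              · obtain ⟨x, hxS, hxd, hxadj⟩ := hall v hvC
                have hxG : x ∈ Gc := (hGmem x).mpr ⟨hxS, hxd, v, hvC, hxadj⟩
                have hgx : g ≠ x := by intro h; rw [← h] at hxd; omega
                refine Or.inr (two_le_sum_pair
                  (mem_filter.mpr ⟨hgS, ((hCmem v).mp hvC).2.2.symm⟩)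
                  (mem_filter.mpr ⟨hxS, hxadj⟩) hgx ?_)
                have h1 := shape_self g 1 Gc (fun _ => (0:ℕ))
                have h2 := shape_memB (g := g) (a := 1) (f' := fun _ => (0:ℕ)) hxG
                omega
              · exact Or.inl (shape_memB hvG)
            · rw [shape_sum _ hgS hGS]
              simp only [Finset.sum_const_zero]
              omega
          · push_neg at hall
            obtain ⟨c0, hc0C, hc0⟩ := hall
            have hc0p : c0 ≠ p := fun h => hc0 u hu hud (by rw [h]; exact hadjup.symm)
            have ht2 : 2 ≤ C.card := Finset.one_lt_card.mpr ⟨c0, hc0C, p, hpC, hc0p⟩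
            have hmm : Gc.card + 1 ≤ C.card := by
              have hsub : Gc ⊆ (C.erase c0).biUnion
                  (fun c => S.filter (fun x => dOn G S x r = d ∧ G.Adj c x)) := by
                intro x hx
                obtain ⟨hxS, hxd, c, hcC, hadj⟩ := (hGmem x).mp hx
                have hcne : c ≠ c0 := fun h => hc0 x hxS hxd (by rw [← h]; exact hadj)
                exact mem_biUnion.mpr ⟨c, Finset.mem_erase.mpr ⟨hcne, hcC⟩,
                  mem_filter.mpr ⟨hxS, hxd, hadj⟩⟩
              have h1 : Gc.card ≤ (C.erase c0).card := by
                calc Gc.card ≤ _ := Finset.card_le_card hsub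
                  _ ≤ ∑ c ∈ C.erase c0,
                      (S.filter (fun x => dOn G S x r = d ∧ G.Adj c x)).card :=
                      Finset.card_biUnion_le
                  _ ≤ ∑ _c ∈ C.erase c0, 1 := Finset.sum_le_sum
                      (fun c hc => hB1 c (hCS (Finset.mem_of_mem_erase hc))
                        ((hCmem c).mp (Finset.mem_of_mem_erase hc)).2.1)
                  _ = (C.erase c0).card := by simp
              have h2 : (C.erase c0).card + 1 = C.card := Finset.card_erase_add_one hc0C
              omega
            refine ⟨shape g 2 Gc (fun _ => 0), shape_supp hgS hGS (fun _ _ => rfl), ?_, ?_⟩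
            · intro v hv
              rcases (hWmem v).mp (hvW v hv) with heq | hvC | hvG
              · exact Or.inl (by rw [heq]; exact le_trans one_le_two (shape_self g 2 Gc _))
              · exact Or.inr (two_le_sum_single
                  (mem_filter.mpr ⟨hgS, ((hCmem v).mp hvC).2.2.symm⟩)
                  (shape_self g 2 Gc _))
              · exact Or.inl (shape_memB hvG)
            · rw [shape_sum _ hgS hGS]
              simp only [Finset.sum_const_zero]
              omega
        · -- R nonempty
          have hRne : R.Nonempty := Finset.card_pos.mp (by omega)
          have hd3' : 3 ≤ d := hd3 hRne.choose hRne.choose_spec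
          have hrW : r ∉ W := by
            intro h
            rcases (hWmem r).mp h with heq | hrC | hrG
            · have h0 : dOn G S g r = 0 := by rw [← heq]; exact hDr
              omega
            · have := ((hCmem r).mp hrC).2.1; omega
            · have := ((hGmem r).mp hrG).2.1; omega
          have hrR : r ∈ R := (hRmem r).mpr ⟨hr, hrW⟩
          have hconnR : Conn G R := conn_of_pred (fun v => dOn G S v r) hrR hpredR
          have hgr : g ≠ r := by
            intro h
            have h0 : dOn G S g r = 0 := by rw [h]; exact hDr
            omega
          obtain ⟨h0, hh0S, hadjgh, _, hdh⟩ := exists_pred hr (hwalkS g hgS) hgr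
          have hh0W : h0 ∉ W := by
            intro h
            rcases (hWmem h0).mp h with heq | hC' | hG'
            · rw [heq] at hdh; omega
            · have := ((hCmem h0).mp hC').2.1; omega
            · have := ((hGmem h0).mp hG').2.1; omega
          have hh0R : h0 ∈ R := (hRmem h0).mpr ⟨hh0S, hh0W⟩
          by_cases hall : ∀ c ∈ C, ∃ x ∈ S, dOn G S x r = d ∧ G.Adj c x
          · -- ALL side: a = 1
            have hcovC : ∀ (B : Finset V) (f' : V → ℕ), Gc ⊆ B → ∀ v ∈ C,
                2 ≤ ∑ y ∈ S.filter (fun y => G.Adj v y), shape g 1 B f' y := by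
              intro B f' hGB v hvC
              obtain ⟨x, hxS, hxd, hxadj⟩ := hall v hvC
              have hxG : x ∈ Gc := (hGmem x).mpr ⟨hxS, hxd, v, hvC, hxadj⟩
              have hgx : g ≠ x := by intro h; rw [← h] at hxd; omega
              refine two_le_sum_pair
                (mem_filter.mpr ⟨hgS, ((hCmem v).mp hvC).2.2.symm⟩)
                (mem_filter.mpr ⟨hxS, hxadj⟩) hgx ?_
              have h1 := shape_self g 1 B f'
              have h2 := shape_memB (g := g) (a := 1) (f' := f') (hGB hxG)
              omega
            by_cases hR1 : R.card = 1
            · -- R = {r}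
              have hrG : r ∉ Gc := fun h => by have := ((hGmem r).mp h).2.1; omega
              refine ⟨shape g 1 (insert r Gc) (fun _ => 0),
                shape_supp hgS (insert_subset hr hGS) (fun _ _ => rfl), ?_, ?_⟩
              · intro v hv
                by_cases hvW : v ∈ W
                · rcases (hWmem v).mp hvW with heq | hvC | hvG
                  · exact Or.inl (by rw [heq]; exact shape_self g 1 _ _)
                  · exact Or.inr (hcovC _ _ (Finset.subset_insert _ _) v hvC)
                  · exact Or.inl (shape_memB (Finset.mem_insert_of_mem hvG))
                · have hvR : v ∈ R := (hRmem v).mpr ⟨hv, hvW⟩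
                  have hveq : v = r := by
                    obtain ⟨x, hx⟩ := Finset.card_eq_one.mp hR1
                    rw [hx] at hvR hrR
                    rw [Finset.mem_singleton.mp hvR, ← Finset.mem_singleton.mp hrR]
                  exact Or.inl (by rw [hveq]; exact shape_memB (Finset.mem_insert_self r Gc))
              · rw [shape_sum _ hgS (insert_subset hr hGS),
                  card_insert_of_notMem hrG]
                simp only [Finset.sum_const_zero]
                omega
            · by_cases hR2 : R.card = 2
              · obtain ⟨x1, x2, hx12, hRe⟩ := Finset.card_eq_two.mp hR2
                have hyb : ∃ b, R = {h0, b} ∧ h0 ≠ b := by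
                  have hh0' := hh0R
                  rw [hRe] at hh0'
                  rcases Finset.mem_insert.mp hh0' with rfl | h2
                  · exact ⟨x2, hRe, hx12⟩
                  · rcases Finset.mem_singleton.mp h2 with rfl
                    exact ⟨x1, by rw [hRe, Finset.pair_comm], hx12.symm⟩
                obtain ⟨b, hRe2, hyb2⟩ := hyb
                have hbR : b ∈ R := by rw [hRe2]; simp
                have hbS : b ∈ S := hRS hbR
                have hbG : b ∉ Gc := fun h =>
                  ((hRmem b).mp hbR).2 ((hWmem b).mpr (Or.inr (Or.inr h)))
                have hgb : g ≠ b := by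
                  intro h
                  exact ((hRmem b).mp hbR).2 ((hWmem b).mpr (Or.inl h.symm))
                have hadjyb : G.Adj h0 b :=
                  adj_of_conn_pair (hconnR h0 hh0R b hbR) (by rw [← hRe2]) hyb2
                refine ⟨shape g 1 (insert b Gc) (fun _ => 0),
                  shape_supp hgS (insert_subset hbS hGS) (fun _ _ => rfl), ?_, ?_⟩
                · intro v hv
                  by_cases hvW : v ∈ W
                  · rcases (hWmem v).mp hvW with heq | hvC | hvG
                    · exact Or.inl (by rw [heq]; exact shape_self g 1 _ _)
                    · exact Or.inr (hcovC _ _ (Finset.subset_insert _ _) v hvC)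
                    · exact Or.inl (shape_memB (Finset.mem_insert_of_mem hvG))
                  · have hvR : v ∈ R := (hRmem v).mpr ⟨hv, hvW⟩
                    rw [hRe2] at hvR
                    rcases Finset.mem_insert.mp hvR with rfl | h2
                    · refine Or.inr (two_le_sum_pair
                        (mem_filter.mpr ⟨hgS, hadjgh.symm⟩)
                        (mem_filter.mpr ⟨hbS, hadjyb⟩) hgb ?_)
                      have h1 := shape_self g 1 (insert b Gc) (fun _ => (0:ℕ))
                      have h2 := shape_memB (g := g) (a := 1) (f' := fun _ => (0:ℕ))
                        (Finset.mem_insert_self b Gc)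
                      omega
                    · rcases Finset.mem_singleton.mp h2 with rfl
                      exact Or.inl (shape_memB (Finset.mem_insert_self v Gc))
                · rw [shape_sum _ hgS (insert_subset hbS hGS),
                    card_insert_of_notMem hbG]
                  simp only [Finset.sum_const_zero]
                  omega
              · have hR3 : 3 ≤ R.card := by omega
                have hRN : R.card ≤ N := by omega
                obtain ⟨f', hs', hc', hb'⟩ := IH R hRN hconnR hR3
                have hs'S : ∀ v, v ∉ S → f' v = 0 := fun v hv => hs' v (fun h => hv (hRS h))
                refine ⟨shape g 1 Gc f', shape_supp hgS hGS hs'S, ?_, ?_⟩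
                · intro v hv
                  by_cases hvW : v ∈ W
                  · rcases (hWmem v).mp hvW with heq | hvC | hvG
                    · exact Or.inl (by rw [heq]; exact shape_self g 1 _ _)
                    · exact Or.inr (hcovC _ _ (Finset.Subset.refl _) v hvC)
                    · exact Or.inl (shape_memB hvG)
                  · exact cover_mono hRS (shape_f' g 1 Gc f')
                      (hc' v ((hRmem v).mpr ⟨hv, hvW⟩))
                · rw [shape_sum _ hgS hGS]
                  have hsub : ∑ v ∈ S, f' v = ∑ v ∈ R, f' v :=
                    (Finset.sum_subset hRS (fun x _ hx => hs' x hx)).symm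
                  rw [hsub]
                  omega
          · -- MIXED side: a = 2
            push_neg at hall
            obtain ⟨c0, hc0C, hc0⟩ := hall
            have hc0p : c0 ≠ p := fun h => hc0 u hu hud (by rw [h]; exact hadjup.symm)
            have ht2 : 2 ≤ C.card := Finset.one_lt_card.mpr ⟨c0, hc0C, p, hpC, hc0p⟩
            have hmm : Gc.card + 1 ≤ C.card := by
              have hsub : Gc ⊆ (C.erase c0).biUnion
                  (fun c => S.filter (fun x => dOn G S x r = d ∧ G.Adj c x)) := by
                intro x hx
                obtain ⟨hxS, hxd, c, hcC, hadj⟩ := (hGmem x).mp hx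
                have hcne : c ≠ c0 := fun h => hc0 x hxS hxd (by rw [← h]; exact hadj)
                exact mem_biUnion.mpr ⟨c, Finset.mem_erase.mpr ⟨hcne, hcC⟩,
                  mem_filter.mpr ⟨hxS, hxd, hadj⟩⟩
              have h1 : Gc.card ≤ (C.erase c0).card := by
                calc Gc.card ≤ _ := Finset.card_le_card hsub
                  _ ≤ ∑ c ∈ C.erase c0,
                      (S.filter (fun x => dOn G S x r = d ∧ G.Adj c x)).card :=
                      Finset.card_biUnion_le
                  _ ≤ ∑ _c ∈ C.erase c0, 1 := Finset.sum_le_sum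
                      (fun c hc => hB1 c (hCS (Finset.mem_of_mem_erase hc))
                        ((hCmem c).mp (Finset.mem_of_mem_erase hc)).2.1)
                  _ = (C.erase c0).card := by simp
              have h2 : (C.erase c0).card + 1 = C.card := Finset.card_erase_add_one hc0C
              omega
            have hcovC2 : ∀ (B : Finset V) (f' : V → ℕ), ∀ v ∈ C,
                2 ≤ ∑ y ∈ S.filter (fun y => G.Adj v y), shape g 2 B f' y :=
              fun B f' v hvC => two_le_sum_single
                (mem_filter.mpr ⟨hgS, ((hCmem v).mp hvC).2.2.symm⟩) (shape_self g 2 B f')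
            by_cases hR1 : R.card = 1
            · -- R = {r}, and h0 = r so g ~ r
              have hh0r : h0 = r := by
                obtain ⟨x, hx⟩ := Finset.card_eq_one.mp hR1
                rw [hx] at hh0R hrR
                rw [Finset.mem_singleton.mp hh0R, ← Finset.mem_singleton.mp hrR]
              have hadjrg : G.Adj r g := by rw [← hh0r]; exact hadjgh.symm
              refine ⟨shape g 2 Gc (fun _ => 0), shape_supp hgS hGS (fun _ _ => rfl), ?_, ?_⟩
              · intro v hv
                by_cases hvW : v ∈ W
                · rcases (hWmem v).mp hvW with heq | hvC | hvG
                  · exact Or.inl (by rw [heq]; exact le_trans one_le_two (shape_self g 2 _ _))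
                  · exact Or.inr (hcovC2 _ _ v hvC)
                  · exact Or.inl (shape_memB hvG)
                · have hvR : v ∈ R := (hRmem v).mpr ⟨hv, hvW⟩
                  have hveq : v = r := by
                    obtain ⟨x, hx⟩ := Finset.card_eq_one.mp hR1
                    rw [hx] at hvR hrR
                    rw [Finset.mem_singleton.mp hvR, ← Finset.mem_singleton.mp hrR]
                  refine Or.inr (two_le_sum_single
                    (mem_filter.mpr ⟨hgS, by rw [hveq]; exact hadjrg⟩)
                    (shape_self g 2 Gc _))
              · rw [shape_sum _ hgS hGS]
                simp only [Finset.sum_const_zero]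
                omega
            · by_cases hR2 : R.card = 2
              · obtain ⟨x1, x2, hx12, hRe⟩ := Finset.card_eq_two.mp hR2
                have hyb : ∃ b, R = {h0, b} ∧ h0 ≠ b := by
                  have hh0' := hh0R
                  rw [hRe] at hh0'
                  rcases Finset.mem_insert.mp hh0' with rfl | h2
                  · exact ⟨x2, hRe, hx12⟩
                  · rcases Finset.mem_singleton.mp h2 with rfl
                    exact ⟨x1, by rw [hRe, Finset.pair_comm], hx12.symm⟩
                obtain ⟨b, hRe2, hyb2⟩ := hyb
                have hbR : b ∈ R := by rw [hRe2]; simp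
                have hbS : b ∈ S := hRS hbR
                have hbG : b ∉ Gc := fun h =>
                  ((hRmem b).mp hbR).2 ((hWmem b).mpr (Or.inr (Or.inr h)))
                refine ⟨shape g 2 (insert b Gc) (fun _ => 0),
                  shape_supp hgS (insert_subset hbS hGS) (fun _ _ => rfl), ?_, ?_⟩
                · intro v hv
                  by_cases hvW : v ∈ W
                  · rcases (hWmem v).mp hvW with heq | hvC | hvG
                    · refine Or.inl (by rw [heq]; exact le_trans one_le_two (shape_self g 2 _ _))
                    · exact Or.inr (hcovC2 _ _ v hvC)
                    · exact Or.inl (shape_memB (Finset.mem_insert_of_mem hvG))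
                  · have hvR : v ∈ R := (hRmem v).mpr ⟨hv, hvW⟩
                    rw [hRe2] at hvR
                    rcases Finset.mem_insert.mp hvR with rfl | h2
                    · refine Or.inr (two_le_sum_single
                        (mem_filter.mpr ⟨hgS, hadjgh.symm⟩)
                        (shape_self g 2 (insert b Gc) _))
                    · rcases Finset.mem_singleton.mp h2 with rfl
                      exact Or.inl (shape_memB (Finset.mem_insert_self v Gc))
                · rw [shape_sum _ hgS (insert_subset hbS hGS),
                    card_insert_of_notMem hbG]
                  simp only [Finset.sum_const_zero]
                  omega
              · have hR3 : 3 ≤ R.card := by omega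
                have hRN : R.card ≤ N := by omega
                obtain ⟨f', hs', hc', hb'⟩ := IH R hRN hconnR hR3
                have hs'S : ∀ v, v ∉ S → f' v = 0 := fun v hv => hs' v (fun h => hv (hRS h))
                refine ⟨shape g 2 Gc f', shape_supp hgS hGS hs'S, ?_, ?_⟩
                · intro v hv
                  by_cases hvW : v ∈ W
                  · rcases (hWmem v).mp hvW with heq | hvC | hvG
                    · refine Or.inl (by rw [heq]; exact le_trans one_le_two (shape_self g 2 _ _))
                    · exact Or.inr (hcovC2 _ _ v hvC)
                    · exact Or.inl (shape_memB hvG)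
                  · exact cover_mono hRS (shape_f' g 2 Gc f')
                      (hc' v ((hRmem v).mpr ⟨hv, hvW⟩))
                · rw [shape_sum _ hgS hGS]
                  have hsub : ∑ v ∈ S, f' v = ∑ v ∈ R, f' v :=
                    (Finset.sum_subset hRS (fun x _ hx => hs' x hx)).symm
                  rw [hsub]
                  omega

end AuxStrongDiff

theorem stmt_2 {V : Type*} [Fintype V] [DecidableEq V] (G : SimpleGraph V)
    [DecidableRel G.Adj] (hconn : G.Connected) (hn : 3 ≤ Fintype.card V) :
    (Fintype.card V : ℤ) ≤ 4 * sdiff G := by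
  classical
  have hconnU : Conn G (univ : Finset V) := by
    intro u _ v _
    obtain ⟨w⟩ := hconn.preconnected u v
    exact ⟨w, fun x _ => mem_univ x⟩
  have hcard : (univ : Finset V).card = Fintype.card V := Finset.card_univ
  obtain ⟨f, hsupp, hcov, hsum⟩ := main (Fintype.card V) univ (le_of_eq hcard) hconnU
    (by rw [hcard]; exact hn)
  rw [hcard] at hsum
  obtain ⟨D, hDdef⟩ : ∃ D, D = univ.filter (fun v => 1 ≤ f v) := ⟨_, rfl⟩
  have hDmem : ∀ v, v ∈ D ↔ 1 ≤ f v := fun v => by rw [hDdef]; simp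
  have hfD : ∀ v, v ∉ D → f v = 0 := by
    intro v hv
    have h1 : ¬ 1 ≤ f v := fun h => hv ((hDmem v).mpr h)
    omega
  have hext : extNbhd G D = Dᶜ := by
    ext w
    simp only [extNbhd, mem_filter, mem_univ, true_and, Finset.mem_compl]
    constructor
    · intro h; exact h.1
    · intro h
      refine ⟨h, ?_⟩
      have hf0 : f w = 0 := hfD w h
      rcases hcov w (mem_univ w) with h1 | h2
      · omega
      · by_contra hno
        push_neg at hno
        have hz : ∑ y ∈ univ.filter (fun y => G.Adj w y), f y = 0 := by
          apply Finset.sum_eq_zero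
          intro y hy
          have hadj : G.Adj w y := (mem_filter.mp hy).2
          exact hfD y (fun hyD => hno y hyD hadj)
        omega
  have hDle : D.card ≤ Fintype.card V := by rw [← hcard]; exact card_le_univ D
  have hextcard : (extNbhd G D).card = Fintype.card V - D.card := by
    rw [hext, Finset.card_compl]
  have hweak : ∀ v ∈ weak G D, 2 ≤ f v := by
    intro v hv
    obtain ⟨hvD, hepn⟩ := mem_filter.mp hv
    obtain ⟨w, hw⟩ := hepn
    obtain ⟨hwnD, hnb⟩ := (mem_filter.mp hw).2
    have hf0 : f w = 0 := hfD w hwnD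
    rcases hcov w (mem_univ w) with h1 | h2
    · omega
    · have hfilter : univ.filter (fun y => G.Adj w y) = G.neighborFinset w := by
        ext y; simp [SimpleGraph.mem_neighborFinset]
      rw [hfilter] at h2
      have hss : ∑ y ∈ G.neighborFinset w, f y
          = ∑ y ∈ G.neighborFinset w ∩ D, f y := by
        refine (Finset.sum_subset Finset.inter_subset_left ?_).symm
        intro x hx hnx
        exact hfD x (fun hxD => hnx (Finset.mem_inter.mpr ⟨hx, hxD⟩))
      rw [hss, hnb, Finset.sum_singleton] at h2
      exact h2
  have hDsub : weak G D ⊆ D := Finset.filter_subset _ _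
  have hsum2 : D.card + (weak G D).card ≤ ∑ v ∈ D, f v := by
    have hcd : (D \ weak G D).card = D.card - (weak G D).card := card_sdiff_of_subset hDsub
    have hcle := Finset.card_le_card hDsub
    calc D.card + (weak G D).card
        = ∑ _v ∈ D \ weak G D, 1 + ∑ _v ∈ weak G D, 2 := by
          rw [Finset.sum_const, Finset.sum_const, smul_eq_mul, mul_one, smul_eq_mul]
          omega
      _ ≤ ∑ v ∈ D \ weak G D, f v + ∑ v ∈ weak G D, f v :=
          add_le_add
            (Finset.sum_le_sum fun v hv => (hDmem v).mp (Finset.mem_sdiff.mp hv).1)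
            (Finset.sum_le_sum fun v hv => hweak v hv)
      _ = ∑ v ∈ D, f v := Finset.sum_sdiff hDsub
  have hsumD : ∑ v ∈ D, f v ≤ ∑ v ∈ univ, f v :=
    Finset.sum_le_sum_of_subset (subset_univ D)
  have key : 4 * (D.card + (weak G D).card) ≤ 3 * Fintype.card V := by omega
  have hD4 : (Fintype.card V : ℤ) ≤ 4 * sdiffSet G D := by
    unfold sdiffSet
    rw [hextcard]
    have hwle : (weak G D).card ≤ D.card := Finset.card_le_card hDsub
    omega
  have hle2 : sdiffSet G D ≤ sdiff G :=
    Finset.le_sup' (sdiffSet G) (Finset.mem_powerset.mpr (subset_univ D))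
  linarith



end StrongDifferential
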